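/- arXiv:1302.5593 — 3 statements merged into one kernel-verified Lean document; each statement's English description precedes it below -/
import Mathlib

section
/- Suppose the matrices M_1,…,M_r satisfy conditions (H1a), (H1b) and (H1c). Let 1 ≤ j ≤ r, let w ∈ W_m, and let a ∈ A satisfy M_j(a, t(w)) = 1. Then there exists a unique word v ∈ W_{m+e_j} such that v|[0,m] = w and t(v) = a. -/
open Matrix

variable {r : ℕ} {A : Type*}

/-- The `j`-th standard basis vector of `ℤ^r`. -/
def evec (r : ℕ) (j : Fin r) : Fin r → ℤ := fun i => if i = j then 1 else 0

/-- `w` represents a word of shape `m` (only its values on `[0,m]` matter):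
`m ≥ 0` and the transition matrices are respected on the box `[0,m]`. -/
def IsWord (M : Fin r → Matrix A A ℤ) (m : Fin r → ℤ) (w : (Fin r → ℤ) → A) : Prop :=
  0 ≤ m ∧ ∀ (l : Fin r → ℤ) (j : Fin r), 0 ≤ l → l + evec r j ≤ m →
    M j (w (l + evec r j)) (w l) = 1

/-- Two representing functions agree on the box `[0,m]`; this is equality of
words of shape `m`. -/
def AgreeOn (m : Fin r → ℤ) (w w' : (Fin r → ℤ) → A) : Prop :=
  ∀ l : Fin r → ℤ, 0 ≤ l → l ≤ m → w l = w' l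

/-- The restriction `w|[k,k+n]`, as a word based at `0`: `(restrictW k w) i = w (i + k)`. -/
def restrictW (k : Fin r → ℤ) (w : (Fin r → ℤ) → A) : (Fin r → ℤ) → A :=
  fun i => w (i + k)

/-- `w` (a word of shape `m`) is `p`-periodic: the translate `τ_p w`, given by
`(τ_p w)(x) = w (x - p)`, agrees with `w` on `[0,m] ∩ [p,p+m]`. -/
def IsPeriodic (p m : Fin r → ℤ) (w : (Fin r → ℤ) → A) : Prop :=
  ∀ x : Fin r → ℤ, 0 ≤ x → x ≤ m → p ≤ x → x ≤ p + m → w (x - p) = w x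

/-- Condition (H0): each `M j` is nonzero. -/
def H0 (M : Fin r → Matrix A A ℤ) : Prop := ∀ j, M j ≠ 0

/-- Condition (H1): unique products of words. -/
def H1 (M : Fin r → Matrix A A ℤ) : Prop :=
  ∀ (m n : Fin r → ℤ) (u v : (Fin r → ℤ) → A),
    IsWord M m u → IsWord M n v → u m = v 0 →
      (∃ w, IsWord M (m + n) w ∧ AgreeOn m w u ∧ AgreeOn n (restrictW m w) v) ∧
      (∀ w w', IsWord M (m + n) w → AgreeOn m w u → AgreeOn n (restrictW m w) v →
        IsWord M (m + n) w' → AgreeOn m w' u → AgreeOn n (restrictW m w') v →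
        AgreeOn (m + n) w w')

/-- Condition (H2): the directed graph on `A` with an edge `a → b` whenever
`M i b a = 1` for some `i` is irreducible. -/
def H2 (M : Fin r → Matrix A A ℤ) : Prop :=
  ∀ a b : A, Relation.ReflTransGen (fun x y => ∃ i, M i y x = 1) a b

/-- Condition (H3): for each nonzero `p ∈ ℤ^r` there is a non-`p`-periodic word. -/
def H3 (M : Fin r → Matrix A A ℤ) : Prop :=
  ∀ p : Fin r → ℤ, p ≠ 0 → ∃ (m : Fin r → ℤ) (w : (Fin r → ℤ) → A),
    IsWord M m w ∧ ¬ IsPeriodic p m w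

/-- Condition (H1a): the matrices commute. -/
def H1a [Fintype A] (M : Fin r → Matrix A A ℤ) : Prop :=
  ∀ i j, M i * M j = M j * M i

/-- Condition (H1b): for `i < j`, the entries of `M i * M j` lie in `{0,1}`. -/
def H1b [Fintype A] (M : Fin r → Matrix A A ℤ) : Prop :=
  ∀ i j, i < j → ∀ a b : A, (M i * M j) b a = 0 ∨ (M i * M j) b a = 1

/-- Condition (H1c): for `i < j < k`, the entries of `M i * M j * M k` lie in `{0,1}`. -/
def H1c [Fintype A] (M : Fin r → Matrix A A ℤ) : Prop :=
  ∀ i j k, i < j → j < k → ∀ a b : A,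
    (M i * M j * M k) b a = 0 ∨ (M i * M j * M k) b a = 1

/-- Condition (H3*). -/
def H3star (M : Fin r → Matrix A A ℤ) : Prop :=
  ∀ (j : Fin r) (m : Fin r → ℤ), m j = 0 → ∀ w : (Fin r → ℤ) → A, IsWord M m w →
    ∃ u u', IsWord M (m + evec r j) u ∧ IsWord M (m + evec r j) u' ∧
      AgreeOn m u w ∧ AgreeOn m u' w ∧ u (evec r j) ≠ u' (evec r j)

/-- `x` represents the product word `uv` of `u ∈ W_m` and `v ∈ W_n`. -/
def IsProd (M : Fin r → Matrix A A ℤ) (m n : Fin r → ℤ)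
    (u v x : (Fin r → ℤ) → A) : Prop :=
  IsWord M (m + n) x ∧ AgreeOn m x u ∧ AgreeOn n (restrictW m x) v

lemma sum01 {ι : Type*} [Fintype ι] (f : ι → ℤ) (h0 : ∀ i, f i = 0 ∨ f i = 1)
    (h : ∑ i, f i = 1) : ∃! i, f i = 1 := by
  classical
  have hs : ∑ i, f i = ((Finset.univ.filter fun i => f i = 1).card : ℤ) := by
    rw [← Finset.sum_boole]
    exact Finset.sum_congr rfl fun i _ => by rcases h0 i with h' | h' <;> simp [h']
  rw [hs] at h
  have hcard : (Finset.univ.filter fun i => f i = 1).card = 1 := by exact_mod_cast h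
  obtain ⟨a, ha⟩ := Finset.card_eq_one.mp hcard
  refine ⟨a, ?_, ?_⟩
  · have : a ∈ Finset.univ.filter fun i => f i = 1 := ha ▸ Finset.mem_singleton_self a
    simpa using this
  · intro b hb
    have : b ∈ Finset.univ.filter fun i => f i = 1 := by simpa using hb
    rw [ha] at this; simpa using this

lemma one_le_sum01 {ι : Type*} [Fintype ι] (f : ι → ℤ) (h0 : ∀ i, 0 ≤ f i)
    (i0 : ι) (hi : f i0 = 1) : 1 ≤ ∑ i, f i :=
  hi ▸ Finset.single_le_sum (fun i _ => h0 i) (Finset.mem_univ i0)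

lemma mul01iff {u v : ℤ} (hu : u = 0 ∨ u = 1) (hv : v = 0 ∨ v = 1) :
    u * v = 1 ↔ (u = 1 ∧ v = 1) := by rcases hu with h|h <;> rcases hv with h'|h' <;> simp [h, h']

lemma mul01or {u v : ℤ} (hu : u = 0 ∨ u = 1) (hv : v = 0 ∨ v = 1) :
    u * v = 0 ∨ u * v = 1 := by rcases hu with h|h <;> rcases hv with h'|h' <;> simp [h, h']

section Mats
variable [Fintype A] {M : Fin r → Matrix A A ℤ}
  (hM : ∀ j (a b : A), M j b a = 0 ∨ M j b a = 1)
  (h1a : H1a M) (h1b : H1b M) (h1c : H1c M)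

include hM in
lemma entry_nonneg (j : Fin r) (a b : A) : 0 ≤ M j b a := by
  rcases hM j a b with h|h <;> simp [h]

include h1a h1b in
lemma pair01 {p q : Fin r} (hpq : p ≠ q) (c b : A) :
    (M p * M q) c b = 0 ∨ (M p * M q) c b = 1 := by
  rcases hpq.lt_or_gt with h|h
  · exact h1b p q h b c
  · rw [h1a p q]; exact h1b q p h b c

include h1a h1c in
lemma triple01 {p q s : Fin r} (hpq : p ≠ q) (hps : p ≠ s) (hqs : q ≠ s) (c b : A) :
    (M p * M q * M s) c b = 0 ∨ (M p * M q * M s) c b = 1 := by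
  have s12 : ∀ p q s : Fin r, M p * M q * M s = M q * M p * M s := fun p q s => by rw [h1a p q]
  have s23 : ∀ p q s : Fin r, M p * M q * M s = M p * M s * M q := fun p q s => by
    rw [mul_assoc, h1a q s, ← mul_assoc]
  rcases hpq.lt_or_gt with h1|h1 <;> rcases hps.lt_or_gt with h2|h2 <;>
    rcases hqs.lt_or_gt with h3|h3
  · exact h1c p q s h1 h3 b c
  · rw [s23 p q s]; exact h1c p s q h2 h3 b c
  · omega
  · rw [s23 p q s, s12 p s q]; exact h1c s p q h2 h1 b c
  · rw [s12 p q s]; exact h1c q p s h1 h2 b c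
  · omega
  · rw [s12 p q s, s23 q p s]; exact h1c q s p h3 h2 b c
  · rw [s12 p q s, s23 q p s, s12 q s p]; exact h1c s q p h3 h1 b c

lemma triple_apply (p q s : Fin r) (c b : A) :
    (M p * M q * M s) c b = ∑ z : A × A, M p c z.2 * M q z.2 z.1 * M s z.1 b := by
  rw [Matrix.mul_apply]
  simp_rw [Matrix.mul_apply, Finset.sum_mul]
  rw [← Finset.sum_product', Finset.univ_product_univ]

include hM h1a h1b in
lemma pair_one {p q : Fin r} (hpq : p ≠ q) {c b x : A}
    (hx : M q x b = 1) (hc : M p c x = 1) : (M p * M q) c b = 1 := by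
  have h01 := pair01 h1a h1b hpq c b
  have hge : 1 ≤ (M p * M q) c b := by
    rw [Matrix.mul_apply]
    exact one_le_sum01 _ (fun d => mul_nonneg (entry_nonneg hM _ _ _) (entry_nonneg hM _ _ _)) x
      (by rw [hx, hc]; ring)
  omega

include hM in
lemma pair_unique {p q : Fin r} {c b : A} (h : (M p * M q) c b = 1) :
    ∃! x, M p c x = 1 ∧ M q x b = 1 := by
  rw [Matrix.mul_apply] at h
  have := sum01 _ (fun x => mul01or (hM p x c) (hM q b x)) h
  obtain ⟨x, hx, hu⟩ := this
  exact ⟨x, (mul01iff (hM p x c) (hM q b x)).mp hx,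
    fun y hy => hu y ((mul01iff (hM p y c) (hM q b y)).mpr hy)⟩

include hM h1a h1c in
lemma triple_one {p q s : Fin r} (hpq : p ≠ q) (hps : p ≠ s) (hqs : q ≠ s) {c b x y : A}
    (hx : M s x b = 1) (hy : M q y x = 1) (hc : M p c y = 1) :
    (M p * M q * M s) c b = 1 := by
  have h01 := triple01 h1a h1c hpq hps hqs c b
  have hge : 1 ≤ (M p * M q * M s) c b := by
    rw [triple_apply]
    refine one_le_sum01 _ (fun z => mul_nonneg (mul_nonneg (entry_nonneg hM _ _ _)
      (entry_nonneg hM _ _ _)) (entry_nonneg hM _ _ _)) (x, y) ?_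
    simp only []
    rw [hx, hy, hc]; ring
  omega

include hM h1a h1c in
lemma triple_unique {p q s : Fin r} (hpq : p ≠ q) (hps : p ≠ s) (hqs : q ≠ s) {c b x y x' y' : A}
    (hx : M s x b = 1) (hy : M q y x = 1) (hc : M p c y = 1)
    (hx' : M s x' b = 1) (hy' : M q y' x' = 1) (hc' : M p c y' = 1) :
    x = x' ∧ y = y' := by
  have h1 : (M p * M q * M s) c b = 1 := triple_one hM h1a h1c hpq hps hqs hx hy hc
  rw [triple_apply] at h1
  have h0 : ∀ z : A × A, M p c z.2 * M q z.2 z.1 * M s z.1 b = 0 ∨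
      M p c z.2 * M q z.2 z.1 * M s z.1 b = 1 :=
    fun z => mul01or (mul01or (hM p z.2 c) (hM q z.1 z.2)) (hM s b z.1)
  obtain ⟨z, _, hu⟩ := sum01 _ h0 h1
  have e1 : (x, y) = z := hu (x, y) (by simp only []; rw [hx, hy, hc]; ring)
  have e2 : (x', y') = z := hu (x', y') (by simp only []; rw [hx', hy', hc']; ring)
  have := e1.trans e2.symm
  exact ⟨congrArg Prod.fst this, congrArg Prod.snd this⟩

end Mats
section Ext
variable [Fintype A] [Nonempty A]

open Classical in
/-- least index `i ≠ j` with `l i < m i`, or `j` if none. -/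
noncomputable def minIdx (m l : Fin r → ℤ) (j : Fin r) : Fin r :=
  if h : (Finset.univ.filter fun i => i ≠ j ∧ l i < m i).Nonempty then Finset.min' _ h else j

lemma minIdx_mem {m l : Fin r → ℤ} {j : Fin r} (h : ∃ i, i ≠ j ∧ l i < m i) :
    minIdx m l j ≠ j ∧ l (minIdx m l j) < m (minIdx m l j) := by
  classical
  obtain ⟨i, hi⟩ := h
  have hne : (Finset.univ.filter fun i => i ≠ j ∧ l i < m i).Nonempty :=
    ⟨i, by simpa using hi⟩
  rw [minIdx, dif_pos hne]
  have := Finset.min'_mem _ hne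
  simpa using this

lemma minIdx_le {m l : Fin r → ℤ} {j : Fin r} (h : ∃ i, i ≠ j ∧ l i < m i)
    {k : Fin r} (hk : k ≠ j) (hk' : l k < m k) : minIdx m l j ≤ k := by
  classical
  have hne : (Finset.univ.filter fun i => i ≠ j ∧ l i < m i).Nonempty :=
    ⟨k, by simpa using ⟨hk, hk'⟩⟩
  rw [minIdx, dif_pos hne]
  exact Finset.min'_le _ _ (by simpa using ⟨hk, hk'⟩)

lemma sum_sub_evec {m l : Fin r → ℤ} (i0 : Fin r) :
    ∑ i, (m i - (l + evec r i0) i) = (∑ i, (m i - l i)) - 1 := by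
  have : ∀ i, m i - (l + evec r i0) i = (m i - l i) - (if i = i0 then 1 else 0) := by
    intro i; simp [evec]; ring
  simp_rw [this, Finset.sum_sub_distrib]
  simp

open Classical in
/-- The extension function on the top slab: `extg l` is the value of the extended
word at `l + e j`, for `l` in the slab `{0 ≤ l ≤ m, l j = m j}`. -/
noncomputable def extg (M : Fin r → Matrix A A ℤ) (m : Fin r → ℤ) (j : Fin r)
    (w : (Fin r → ℤ) → A) (a : A) (l : Fin r → ℤ) : A :=
  if h : (0 ≤ l ∧ l ≤ m) ∧ ∃ i, i ≠ j ∧ l i < m i then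
    Classical.epsilon fun d => M j d (w l) = 1 ∧
      M (minIdx m l j) (extg M m j w a (l + evec r (minIdx m l j))) d = 1
  else a
termination_by (∑ i, (m i - l i)).toNat
decreasing_by
  have hlt := (minIdx_mem h.2).2
  have h1 : ∑ i, (m i - (l + evec r (minIdx m l j)) i) = (∑ i, (m i - l i)) - 1 :=
    sum_sub_evec _
  have hpos : 1 ≤ ∑ i, (m i - l i) := by
    calc (1:ℤ) ≤ m (minIdx m l j) - l (minIdx m l j) := by omega
    _ ≤ ∑ i, (m i - l i) :=
        Finset.single_le_sum (f := fun i => m i - l i)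
          (fun i _ => by
            show (0:ℤ) ≤ m i - l i
            have h1 : (0:ℤ) ≤ l i := h.1.1 i; have h2 : l i ≤ m i := h.1.2 i; omega)
          (Finset.mem_univ (minIdx m l j))
  rw [Int.toNat_lt_toNat (by omega)]
  omega

lemma extg_pos (M : Fin r → Matrix A A ℤ) (m : Fin r → ℤ) (j : Fin r)
    (w : (Fin r → ℤ) → A) (a : A) {l : Fin r → ℤ}
    (h0 : 0 ≤ l) (hm : l ≤ m) (h : ∃ i, i ≠ j ∧ l i < m i) :
    extg M m j w a l = Classical.epsilon fun d => M j d (w l) = 1 ∧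
      M (minIdx m l j) (extg M m j w a (l + evec r (minIdx m l j))) d = 1 := by
  rw [extg, dif_pos ⟨⟨h0, hm⟩, h⟩]

lemma extg_neg (M : Fin r → Matrix A A ℤ) (m : Fin r → ℤ) (j : Fin r)
    (w : (Fin r → ℤ) → A) (a : A) {l : Fin r → ℤ}
    (h : ¬ ∃ i, i ≠ j ∧ l i < m i) : extg M m j w a l = a := by
  rw [extg, dif_neg fun hc => h hc.2]

end Ext

lemma add_evec_apply (l : Fin r → ℤ) (i k : Fin r) :
    (l + evec r i) k = l k + if k = i then 1 else 0 := by simp [evec]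

lemma zero_le_add_evec {l : Fin r → ℤ} (h0 : 0 ≤ l) (i : Fin r) : 0 ≤ l + evec r i := by
  intro k
  have h : (0:ℤ) ≤ l k := h0 k
  show (0:ℤ) ≤ (l + evec r i) k
  rw [add_evec_apply]
  split <;> linarith

lemma add_evec_le {l m : Fin r → ℤ} {i : Fin r} (hm : l ≤ m) (hi : l i < m i) :
    l + evec r i ≤ m := by
  intro k
  have h := hm k
  show (l + evec r i) k ≤ m k
  rw [add_evec_apply]
  by_cases hk : k = i
  · subst hk; rw [if_pos rfl]; linarith
  · rw [if_neg hk]; linarith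

lemma le_of_add_evec_le {l m : Fin r → ℤ} {i : Fin r} (h : l + evec r i ≤ m) : l ≤ m := by
  intro k
  have hk : (l + evec r i) k ≤ m k := h k
  rw [add_evec_apply] at hk
  split at hk <;> linarith

lemma lt_of_add_evec_le {l m : Fin r → ℤ} {i : Fin r} (h : l + evec r i ≤ m) : l i < m i := by
  have hk : (l + evec r i) i ≤ m i := h i
  rw [add_evec_apply, if_pos rfl] at hk
  linarith

lemma add_evec_j {l m : Fin r → ℤ} {i j : Fin r} (hij : i ≠ j) (hj : l j = m j) :
    (l + evec r i) j = m j := by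
  rw [add_evec_apply, if_neg (fun h => hij h.symm), hj]
  ring

lemma add_evec_comm (l : Fin r → ℤ) (p q : Fin r) :
    l + evec r p + evec r q = l + evec r q + evec r p := add_right_comm l _ _

lemma add_evec_add_evec_le {l m : Fin r → ℤ} {p q : Fin r} (hpq : p ≠ q)
    (hp : l + evec r p ≤ m) (hq : l + evec r q ≤ m) : l + evec r p + evec r q ≤ m := by
  intro k
  have h1 : (l + evec r p) k ≤ m k := hp k
  have h2 : (l + evec r q) k ≤ m k := hq k
  show (l + evec r p + evec r q) k ≤ m k
  rw [add_evec_apply] at h1 h2 ⊢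
  rw [add_evec_apply]
  by_cases e1 : k = p <;> by_cases e2 : k = q
  · exact absurd (e1 ▸ e2 : p = q) hpq
  · rw [if_pos e1, if_neg e2]; rw [if_pos e1] at h1; linarith
  · rw [if_neg e1, if_pos e2]; rw [if_pos e2] at h2; linarith
  · rw [if_neg e1, if_neg e2]; rw [if_neg e1] at h1; linarith


section Spec
variable [Fintype A] [Nonempty A]

theorem extg_spec {M : Fin r → Matrix A A ℤ}
    (hM : ∀ j (a b : A), M j b a = 0 ∨ M j b a = 1)
    (h1a : H1a M) (h1b : H1b M) (h1c : H1c M)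
    {m : Fin r → ℤ} {j : Fin r} {w : (Fin r → ℤ) → A} {a : A}
    (hw : IsWord M m w) (ha : M j a (w m) = 1) :
    ∀ n : ℕ, ∀ l : Fin r → ℤ, (∑ i, (m i - l i)).toNat ≤ n → 0 ≤ l → l ≤ m → l j = m j →
      M j (extg M m j w a l) (w l) = 1 ∧
      ∀ i, i ≠ j → l + evec r i ≤ m →
        M i (extg M m j w a (l + evec r i)) (extg M m j w a l) = 1 := by
  intro n
  induction n using Nat.strong_induction_on with
  | _ n IH =>
  intro l hn h0 hm hj
  by_cases h : ∃ i, i ≠ j ∧ l i < m i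
  case neg =>
    -- boundary case : l = m
    have hlm : l = m := by
      funext k
      by_cases hk : k = j
      · rw [hk]; exact hj
      · exact le_antisymm (hm k) (by
          by_contra hc
          exact h ⟨k, hk, by omega⟩)
    subst hlm
    rw [extg_neg M l j w a h]
    refine ⟨ha, fun i hij hle => absurd (lt_of_add_evec_le hle) (by omega)⟩
  case pos =>
    obtain ⟨hi0j, hi0lt⟩ := minIdx_mem h
    set i0 := minIdx m l j with hi0def
    set l1 := l + evec r i0 with hl1def
    -- basic facts about l1
    have F1 : 0 ≤ l1 := zero_le_add_evec h0 i0
    have F2 : l1 ≤ m := add_evec_le hm hi0lt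
    have F3 : l1 j = m j := add_evec_j hi0j hj
    -- measure facts
    have hS1 : 1 ≤ ∑ i, (m i - l i) := by
      calc (1:ℤ) ≤ m i0 - l i0 := by omega
      _ ≤ ∑ i, (m i - l i) :=
        Finset.single_le_sum (f := fun i => m i - l i)
          (fun i _ => by
            show (0:ℤ) ≤ m i - l i
            have h1 : (0:ℤ) ≤ l i := h0 i; have h2 : l i ≤ m i := hm i; omega)
          (Finset.mem_univ i0)
    have hsub1 : ∑ i, (m i - l1 i) = (∑ i, (m i - l i)) - 1 := sum_sub_evec i0
    have F4 : (∑ i, (m i - l1 i)).toNat ≤ n - 1 := by omega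
    have hn1 : n - 1 < n := by omega
    -- induction hypothesis at l1
    have IH1 := IH (n-1) hn1 l1 F4 F1 F2 F3
    -- word edge
    have We : M i0 (w l1) (w l) = 1 := hw.2 l i0 h0 F2
    -- the defining pair at l
    have Pj : (M j * M i0) (extg M m j w a l1) (w l) = 1 :=
      pair_one hM h1a h1b (Ne.symm hi0j) We IH1.1
    rw [h1a j i0] at Pj
    obtain ⟨d0, hd0, _⟩ := pair_unique hM Pj
    have hval : M j (extg M m j w a l) (w l) = 1 ∧
        M i0 (extg M m j w a l1) (extg M m j w a l) = 1 := by
      rw [extg_pos M m j w a h0 hm h, ← hi0def, ← hl1def]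
      exact Classical.epsilon_spec
        (p := fun d => M j d (w l) = 1 ∧ M i0 (extg M m j w a l1) d = 1) ⟨d0, hd0.2, hd0.1⟩
    refine ⟨hval.1, fun i hij hlei => ?_⟩
    by_cases hi : i = i0
    · subst hi; exact hval.2
    · -- general direction i ≠ i0
      have hii0 : i0 < i :=
        lt_of_le_of_ne (minIdx_le h hij (lt_of_add_evec_le hlei)) (fun he => hi he.symm)
      set l' := l + evec r i with hl'def
      have G1 : 0 ≤ l' := zero_le_add_evec h0 i
      have G2 : l' ≤ m := hlei
      have G3 : l' j = m j := add_evec_j hij hj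
      have hsub2 : ∑ k, (m k - l' k) = (∑ k, (m k - l k)) - 1 := sum_sub_evec i
      have G4 : (∑ k, (m k - l' k)).toNat ≤ n - 1 := by omega
      have IH2 := IH (n-1) hn1 l' G4 G1 G2 G3
      -- the double-step corner
      have hle2 : l' + evec r i0 ≤ m :=
        add_evec_add_evec_le hi hlei (add_evec_le hm hi0lt)
      have hle2' : l1 + evec r i ≤ m := by
        rw [hl1def, add_evec_comm]; exact hle2
      -- the four known edges of the top face/cube
      have E1 : M i0 (extg M m j w a (l' + evec r i0)) (extg M m j w a l') = 1 :=
        IH2.2 i0 hi0j hle2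
      have E2 : M i (extg M m j w a (l1 + evec r i)) (extg M m j w a l1) = 1 :=
        IH1.2 i hij hle2'
      have E2' : M i (extg M m j w a (l' + evec r i0)) (extg M m j w a l1) = 1 := by
        rwa [hl1def, add_evec_comm] at E2
      have We' : M i (w l') (w l) = 1 := hw.2 l i h0 hlei
      -- pair completion d' above extg l in direction i
      have P1 : (M i * M i0) (extg M m j w a (l' + evec r i0)) (extg M m j w a l) = 1 :=
        pair_one hM h1a h1b (fun hc => hi hc) hval.2 E2'
      rw [h1a i i0] at P1
      obtain ⟨d', hd', _⟩ := pair_unique hM P1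
      -- pair completion x' below extg l' in direction j
      have P2 : (M j * M i) (extg M m j w a l') (w l) = 1 :=
        pair_one hM h1a h1b (fun hc => hij hc.symm) We' IH2.1
      rw [h1a j i] at P2
      obtain ⟨x', hx', _⟩ := pair_unique hM P2
      -- triple uniqueness in the cube
      have htrip := triple_unique hM h1a h1c
        (p := i0) (q := i) (s := j)
        (ne_of_lt hii0) hi0j hij
        (c := extg M m j w a (l' + evec r i0)) (b := w l)
        (x := extg M m j w a l) (y := d')
        hval.1 hd'.2 hd'.1
        (x' := x') (y' := extg M m j w a l')
        hx'.2 hx'.1 E1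
      rw [← htrip.2] at E1 ⊢
      exact hd'.2

end Spec
section Spec2
variable [Fintype A] [Nonempty A]

lemma add_evec_le_add {l m : Fin r → ℤ} (h : l ≤ m) (j : Fin r) :
    l + evec r j ≤ m + evec r j := fun k => add_le_add (h k) le_rfl

theorem extg_spec2 {M : Fin r → Matrix A A ℤ}
    (hM : ∀ j (a b : A), M j b a = 0 ∨ M j b a = 1)
    (h1a : H1a M) (h1b : H1b M) (h1c : H1c M)
    {m : Fin r → ℤ} {j : Fin r} {w : (Fin r → ℤ) → A} {a : A}
    (hw : IsWord M m w) (ha : M j a (w m) = 1)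
    {v' : (Fin r → ℤ) → A} (hv' : IsWord M (m + evec r j) v')
    (hag : AgreeOn m v' w) (hta : v' (m + evec r j) = a) :
    ∀ n : ℕ, ∀ l : Fin r → ℤ, (∑ i, (m i - l i)).toNat ≤ n → 0 ≤ l → l ≤ m → l j = m j →
      v' (l + evec r j) = extg M m j w a l := by
  intro n
  induction n using Nat.strong_induction_on with
  | _ n IH =>
  intro l hn h0 hm hj
  by_cases h : ∃ i, i ≠ j ∧ l i < m i
  case neg =>
    have hlm : l = m := by
      funext k
      by_cases hk : k = j
      · rw [hk]; exact hj
      · exact le_antisymm (hm k) (by by_contra hc; exact h ⟨k, hk, by omega⟩)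
    subst hlm
    rw [extg_neg M l j w a h, hta]
  case pos =>
    obtain ⟨hi0j, hi0lt⟩ := minIdx_mem h
    set i0 := minIdx m l j with hi0def
    set l1 := l + evec r i0 with hl1def
    have F1 : 0 ≤ l1 := zero_le_add_evec h0 i0
    have F2 : l1 ≤ m := add_evec_le hm hi0lt
    have F3 : l1 j = m j := add_evec_j hi0j hj
    have hS1 : 1 ≤ ∑ i, (m i - l i) := by
      calc (1:ℤ) ≤ m i0 - l i0 := by omega
      _ ≤ ∑ i, (m i - l i) :=
        Finset.single_le_sum (f := fun i => m i - l i)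
          (fun i _ => by
            show (0:ℤ) ≤ m i - l i
            have h1 : (0:ℤ) ≤ l i := h0 i; have h2 : l i ≤ m i := hm i; omega)
          (Finset.mem_univ i0)
    have hsub1 : ∑ i, (m i - l1 i) = (∑ i, (m i - l i)) - 1 := sum_sub_evec i0
    have F4 : (∑ i, (m i - l1 i)).toNat ≤ n - 1 := by omega
    have hn1 : n - 1 < n := by omega
    -- IH: v' agrees with extg at l1
    have IH1 := IH (n-1) hn1 l1 F4 F1 F2 F3
    -- the defining pair at l has a unique solution
    have specl1 := (extg_spec hM h1a h1b h1c hw ha ((∑ i, (m i - l1 i)).toNat) l1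
      le_rfl F1 F2 F3).1
    have We : M i0 (w l1) (w l) = 1 := hw.2 l i0 h0 F2
    have Pj : (M j * M i0) (extg M m j w a l1) (w l) = 1 :=
      pair_one hM h1a h1b (Ne.symm hi0j) We specl1
    rw [h1a j i0] at Pj
    obtain ⟨d0, _, huniq⟩ := pair_unique hM Pj
    -- candidate 1 : extg l
    have specl := extg_spec hM h1a h1b h1c hw ha ((∑ i, (m i - l i)).toNat) l
      le_rfl h0 hm hj
    have c1 : M i0 (extg M m j w a l1) (extg M m j w a l) = 1 ∧
        M j (extg M m j w a l) (w l) = 1 :=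
      ⟨specl.2 i0 hi0j F2, specl.1⟩
    -- candidate 2 : v' (l + e j)
    have hle1 : l + evec r j ≤ m + evec r j := add_evec_le_add hm j
    have e2a : M j (v' (l + evec r j)) (w l) = 1 := by
      have := hv'.2 l j h0 hle1
      rwa [hag l h0 hm] at this
    have hle2 : (l + evec r j) + evec r i0 ≤ m + evec r j := by
      rw [add_evec_comm]; exact add_evec_le_add F2 j
    have e2b : M i0 (extg M m j w a l1) (v' (l + evec r j)) = 1 := by
      have h2 := hv'.2 (l + evec r j) i0 (zero_le_add_evec h0 j) hle2
      rwa [add_evec_comm, IH1] at h2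
    rw [(huniq _ c1).trans (huniq _ ⟨e2b, e2a⟩).symm]

end Spec2
lemma evec_self (r : ℕ) (j : Fin r) : evec r j j = 1 := if_pos rfl
lemma evec_ne {j k : Fin r} (h : k ≠ j) : evec r j k = 0 := if_neg h

section Final
variable [Fintype A] [Nonempty A]

theorem stmt_aux (hr : 0 < r)
    (M : Fin r → Matrix A A ℤ)
    (hM : ∀ j (a b : A), M j b a = 0 ∨ M j b a = 1)
    (h1a : H1a M) (h1b : H1b M) (h1c : H1c M)
    (j : Fin r) (m : Fin r → ℤ) (w : (Fin r → ℤ) → A) (hw : IsWord M m w)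
    (a : A) (ha : M j a (w m) = 1) :
    ∃ v : (Fin r → ℤ) → A,
      (IsWord M (m + evec r j) v ∧ AgreeOn m v w ∧ v (m + evec r j) = a) ∧
      ∀ v' : (Fin r → ℤ) → A, IsWord M (m + evec r j) v' → AgreeOn m v' w →
        v' (m + evec r j) = a → AgreeOn (m + evec r j) v v' := by
  classical
  have hm0 : 0 ≤ m := hw.1
  set v : (Fin r → ℤ) → A :=
    fun x => if x j = m j + 1 then extg M m j w a (x - evec r j) else w x with hv
  have spec := fun (l : Fin r → ℤ) (h0 : 0 ≤ l) (hm' : l ≤ m) (hj : l j = m j) =>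
    extg_spec hM h1a h1b h1c hw ha ((∑ i, (m i - l i)).toNat) l le_rfl h0 hm' hj
  have hvlow : ∀ x, x ≤ m → v x = w x := by
    intro x hx
    have h1 : x j ≤ m j := hx j
    rw [hv]
    exact if_neg (by intro hc; linarith)
  have hvhigh : ∀ x, x j = m j + 1 → v x = extg M m j w a (x - evec r j) := by
    intro x hx
    rw [hv]; exact if_pos hx
  have hsub : ∀ x : Fin r → ℤ, 0 ≤ x → x ≤ m + evec r j → x j = m j + 1 →
      0 ≤ x - evec r j ∧ x - evec r j ≤ m ∧ (x - evec r j) j = m j := by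
    intro x h0 hx hxj
    refine ⟨fun k => ?_, fun k => ?_, ?_⟩
    · show (0:ℤ) ≤ x k - evec r j k
      have h1 : (0:ℤ) ≤ x k := h0 k
      have h2 : (0:ℤ) ≤ m j := hm0 j
      by_cases hk : k = j
      · rw [hk, evec_self]; rw [hk] at h1; linarith [hxj]
      · rw [evec_ne hk]; linarith
    · show x k - evec r j k ≤ m k
      have h1 : x k ≤ m k + evec r j k := hx k
      by_cases hk : k = j
      · rw [hk] at h1 ⊢; rw [evec_self] at h1 ⊢; linarith
      · rw [evec_ne hk] at h1 ⊢; linarith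
    · show x j - evec r j j = m j
      rw [evec_self]; linarith [hxj]
  have hword : IsWord M (m + evec r j) v := by
    refine ⟨zero_le_add_evec hm0 j, ?_⟩
    intro l p h0 hlp
    by_cases htop : (l + evec r p) j = m j + 1
    · by_cases hpj : p = j
      · -- direction j, top edge
        rw [hpj] at htop
        have hlj : l j = m j := by
          have h1 : (l + evec r j) j = l j + 1 := by
            show l j + evec r j j = l j + 1; rw [evec_self]
          linarith [htop, h1]
        have hlm : l ≤ m := by
          intro k
          have h1 : l k + evec r p k ≤ m k + evec r j k := hlp k
          by_cases hk : k = j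
          · rw [hk]; exact le_of_eq hlj
          · rw [hpj, evec_ne hk] at h1; show l k ≤ m k; linarith
        rw [hpj, hvlow l hlm, hvhigh _ htop, add_sub_cancel_right]
        exact (spec l h0 hlm hlj).1
      · -- direction p ≠ j, top slab
        have hjp : j ≠ p := fun hc => hpj hc.symm
        have hlj : l j = m j + 1 := by
          have h1 : (l + evec r p) j = l j + evec r p j := rfl
          rw [evec_ne hjp] at h1
          linarith [htop]
        have hA : 0 ≤ l - evec r j := by
          intro k
          show (0:ℤ) ≤ l k - evec r j k
          have h1 : (0:ℤ) ≤ l k := h0 k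
          by_cases hk : k = j
          · have h2 : (0:ℤ) ≤ m j := hm0 j
            rw [hk, evec_self]; rw [hk] at h1; linarith [hlj, h2]
          · rw [evec_ne hk]; linarith
        have hl0k : (l - evec r j) + evec r p ≤ m := by
          intro k
          show l k - evec r j k + evec r p k ≤ m k
          have h1 : l k + evec r p k ≤ m k + evec r j k := hlp k
          by_cases hk : k = j
          · rw [hk] at h1 ⊢; rw [evec_self] at h1 ⊢
            rw [evec_ne hjp] at h1 ⊢
            linarith [hlj]
          · rw [evec_ne hk] at h1 ⊢; linarith
        have hB : l - evec r j ≤ m := le_of_add_evec_le hl0k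
        have hC : (l - evec r j) j = m j := by
          show l j - evec r j j = m j
          rw [evec_self]; linarith [hlj]
        have harr : l + evec r p - evec r j = (l - evec r j) + evec r p :=
          (sub_add_eq_add_sub l (evec r j) (evec r p)).symm
        rw [hvhigh l hlj, hvhigh _ htop, harr]
        exact (spec _ hA hB hC).2 p hpj hl0k
    · -- both endpoints in [0, m]
      have h1 : (l + evec r p) j ≤ m j + 1 := by
        have h2 : (l + evec r p) j ≤ m j + evec r j j := hlp j
        rw [evec_self] at h2; exact h2
      have h2 : (l + evec r p) j ≤ m j := Int.lt_add_one_iff.mp (lt_of_le_of_ne h1 htop)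
      have hlkm : l + evec r p ≤ m := by
        intro k
        by_cases hk : k = j
        · rw [hk]; exact h2
        · have h3 : (l + evec r p) k ≤ m k + evec r j k := hlp k
          rw [evec_ne hk] at h3
          show (l + evec r p) k ≤ m k; linarith
      rw [hvlow _ (le_of_add_evec_le hlkm), hvlow _ hlkm]
      exact hw.2 l p h0 hlkm
  have hagree : AgreeOn m v w := fun l _ hl => hvlow l hl
  have htopv : v (m + evec r j) = a := by
    have h1 : (m + evec r j) j = m j + 1 := by
      show m j + evec r j j = m j + 1; rw [evec_self]
    rw [hvhigh _ h1, add_sub_cancel_right]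
    exact extg_neg M m j w a (fun ⟨i, _, hlt⟩ => lt_irrefl _ hlt)
  refine ⟨v, ⟨hword, hagree, htopv⟩, ?_⟩
  intro v' hv' hag' hta' x h0x hx
  by_cases hxj : x j = m j + 1
  · obtain ⟨hA, hB, hC⟩ := hsub x h0x hx hxj
    have h2 := extg_spec2 hM h1a h1b h1c hw ha hv' hag' hta'
      ((∑ i, (m i - (x - evec r j) i)).toNat) (x - evec r j) le_rfl hA hB hC
    rw [sub_add_cancel] at h2
    rw [hvhigh x hxj, ← h2]
  · have hxm : x ≤ m := by
      intro k
      by_cases hk : k = j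
      · have h1 : x j ≤ m j + evec r j j := hx j
        rw [evec_self] at h1
        rw [hk]
        exact Int.lt_add_one_iff.mp (lt_of_le_of_ne h1 hxj)
      · have h1 : x k ≤ m k + evec r j k := hx k
        rw [evec_ne hk] at h1
        show x k ≤ m k; linarith
    rw [hvlow x hxm, hag' x h0x hxm]

end Final


/-- under (H1a), (H1b), (H1c), a word `w ∈ W_m` together with a
letter `a` with `M j a (t w) = 1` extends uniquely to a word `v ∈ W_{m+e_j}`
with `v|[0,m] = w` and `t v = a`. -/
theorem stmt_1 [Fintype A] [Nonempty A] (hr : 0 < r)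
    (M : Fin r → Matrix A A ℤ)
    (hM : ∀ j (a b : A), M j b a = 0 ∨ M j b a = 1)
    (h1a : H1a M) (h1b : H1b M) (h1c : H1c M)
    (j : Fin r) (m : Fin r → ℤ) (w : (Fin r → ℤ) → A) (hw : IsWord M m w)
    (a : A) (ha : M j a (w m) = 1) :
    ∃ v : (Fin r → ℤ) → A,
      (IsWord M (m + evec r j) v ∧ AgreeOn m v w ∧ v (m + evec r j) = a) ∧
      ∀ v' : (Fin r → ℤ) → A, IsWord M (m + evec r j) v' → AgreeOn m v' w →
        v' (m + evec r j) = a → AgreeOn (m + evec r j) v v' := by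
  exact stmt_aux hr M hM h1a h1b h1c j m w hw a ha
end

section
/- Suppose r = 2 and the matrices M_1, M_2 satisfy conditions (H1a) and (H1b). Let j ∈ {1,2}, let w ∈ W_m, and let a ∈ A satisfy M_j(a, t(w)) = 1. Then there exists a unique word v ∈ W_{m+e_j} such that v|[0,m] = w and t(v) = a. -/
open Matrix

variable {r : ℕ} {A : Type*}

lemma aux_sum_one {A : Type*} [Fintype A] (g : A → ℤ) (hg : ∀ d, g d = 0 ∨ g d = 1)
    (h : ∑ d, g d = 1) : ∃! d, g d = 1 := by
  classical
  have hex : ∃ d, g d = 1 := by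
    by_contra hc
    push_neg at hc
    have hz : ∀ d, g d = 0 := fun d => (hg d).resolve_right (hc d)
    simp [hz] at h
  obtain ⟨d, hd⟩ := hex
  refine ⟨d, hd, fun d' hd' => ?_⟩
  by_contra hne
  have h2 : (2:ℤ) ≤ ∑ x, g x := by
    have hpair : ∑ x ∈ ({d', d} : Finset A), g x = 2 := by
      rw [Finset.sum_pair hne, hd, hd']; norm_num
    calc (2:ℤ) = ∑ x ∈ ({d', d} : Finset A), g x := hpair.symm
      _ ≤ ∑ x, g x := Finset.sum_le_sum_of_subset_of_nonneg (Finset.subset_univ _)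
          (fun i _ _ => by rcases hg i with h|h <;> omega)
  omega

lemma aux_square {A : Type*} [Fintype A] (M : Fin 2 → Matrix A A ℤ)
    (hM : ∀ j (a b : A), M j b a = 0 ∨ M j b a = 1)
    (h1a : H1a M) (h1b : H1b M)
    (j k : Fin 2) (hjk : j ≠ k) (p q c : A)
    (h1 : M k q p = 1) (h2 : M j c q = 1) :
    ∃! d, M j d p = 1 ∧ M k c d = 1 := by
  have hge : 1 ≤ (M j * M k) c p := by
    rw [Matrix.mul_apply]
    calc (1:ℤ) = M j c q * M k q p := by rw [h1, h2]; ring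
      _ ≤ ∑ q', M j c q' * M k q' p :=
        Finset.single_le_sum (f := fun q' => M j c q' * M k q' p)
          (fun i _ => by
            rcases hM j i c with h|h <;> rcases hM k p i with h'|h' <;> simp [h, h'])
          (Finset.mem_univ q)
  have h01 : (M j * M k) c p = 0 ∨ (M j * M k) c p = 1 := by
    rcases lt_or_ge j k with h | h
    · exact h1b j k h p c
    · have hkj : k < j := lt_of_le_of_ne h (Ne.symm hjk)
      rw [h1a j k]
      exact h1b k j hkj p c
  have hone : (M k * M j) c p = 1 := by
    rw [h1a k j]
    rcases h01 with h|h <;> omega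
  rw [Matrix.mul_apply] at hone
  have hiff : ∀ d, (M k c d * M j d p = 1) ↔ (M j d p = 1 ∧ M k c d = 1) := fun d => by
    rcases hM k d c with h|h <;> rcases hM j p d with h'|h' <;> simp [h, h']
  obtain ⟨d, hd, hu⟩ := aux_sum_one (fun d => M k c d * M j d p)
    (fun d => by rcases hM k d c with h|h <;> rcases hM j p d with h'|h' <;> simp [h, h'])
    hone
  exact ⟨d, (hiff d).1 hd, fun d' hd' => hu d' ((hiff d').2 hd')⟩

/-- for `r = 2`, under (H1a) and (H1b) alone, a word `w ∈ W_m`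
together with a letter `a` with `M j a (t w) = 1` extends uniquely to a word
`v ∈ W_{m+e_j}` with `v|[0,m] = w` and `t v = a`. -/
theorem stmt_2 [Fintype A] [Nonempty A]
    (M : Fin 2 → Matrix A A ℤ)
    (hM : ∀ j (a b : A), M j b a = 0 ∨ M j b a = 1)
    (h1a : H1a M) (h1b : H1b M)
    (j : Fin 2) (m : Fin 2 → ℤ) (w : (Fin 2 → ℤ) → A) (hw : IsWord M m w)
    (a : A) (ha : M j a (w m) = 1) :
    ∃ v : (Fin 2 → ℤ) → A,
      (IsWord M (m + evec 2 j) v ∧ AgreeOn m v w ∧ v (m + evec 2 j) = a) ∧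
      ∀ v' : (Fin 2 → ℤ) → A, IsWord M (m + evec 2 j) v' → AgreeOn m v' w →
        v' (m + evec 2 j) = a → AgreeOn (m + evec 2 j) v v' := by
  classical
  obtain ⟨k, hjk, hcover⟩ : ∃ k : Fin 2, j ≠ k ∧ ∀ i : Fin 2, j = i ∨ k = i := by
    fin_cases j
    · exact ⟨1, by decide, by decide⟩
    · exact ⟨0, by decide, by decide⟩
  have pcle : ∀ {x y : Fin 2 → ℤ}, x ≤ y → ∀ i, x i ≤ y i := fun h i => h i
  have pc0 : ∀ {x : Fin 2 → ℤ}, 0 ≤ x → ∀ i, (0:ℤ) ≤ x i := fun h i => by simpa using h i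
  obtain ⟨h0m, hword⟩ := hw
  have h0mi : ∀ i, (0:ℤ) ≤ m i := pc0 h0m
  set base : ℕ → (Fin 2 → ℤ) := fun n i => if i = k then m k - n else m i with hbase
  have hbase0 : base 0 = m := by
    funext i; by_cases h : i = k
    · subst h; simp [hbase]
    · simp [hbase, h]
  have hbase_add : ∀ n : ℕ, base (n+1) + evec 2 k = base n := by
    intro n; funext i
    by_cases h : i = k
    · subst h; simp [hbase, evec]; push_cast; ring
    · simp [hbase, evec, h]
  have hbase_nonneg : ∀ n : ℕ, (n:ℤ) ≤ m k → 0 ≤ base n := by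
    intro n hn i
    have h1 := h0mi i
    by_cases h : i = k
    · subst h; simp [hbase]; omega
    · simp [hbase, h]; omega
  have hbase_le : ∀ n : ℕ, base n ≤ m := by
    intro n i
    by_cases h : i = k
    · subst h; simp [hbase]
    · simp [hbase, h]
  set f : ℕ → A := fun n => Nat.rec (motive := fun _ => A) a
    (fun n prev => Classical.epsilon
      fun d => M j d (w (base (n+1))) = 1 ∧ M k prev d = 1) n with hfdef
  have hf0 : f 0 = a := rfl
  have hfs : ∀ n, f (n+1) = Classical.epsilon
      (fun d => M j d (w (base (n+1))) = 1 ∧ M k (f n) d = 1) := fun n => rfl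
  have hstep : ∀ n : ℕ, ((n:ℤ)+1) ≤ m k → M k (w (base n)) (w (base (n+1))) = 1 := by
    intro n hn
    have h1 := hword (base (n+1)) k (hbase_nonneg (n+1) (by push_cast; omega)) ?_
    · rw [hbase_add] at h1; exact h1
    · rw [hbase_add]; exact hbase_le n
  have key : ∀ n : ℕ, (n:ℤ) ≤ m k →
      M j (f n) (w (base n)) = 1 ∧ (n ≠ 0 → M k (f (n-1)) (f n) = 1) := by
    intro n
    induction n with
    | zero =>
      intro _
      exact ⟨by rw [hf0, hbase0]; exact ha, by simp⟩
    | succ n ih =>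
      intro hn
      have hn' : (n:ℤ) ≤ m k := by push_cast at hn; omega
      obtain ⟨P, _⟩ := ih hn'
      have hsq := aux_square M hM h1a h1b j k hjk (w (base (n+1))) (w (base n)) (f n)
        (hstep n (by push_cast at hn; omega)) P
      have heps : M j (f (n+1)) (w (base (n+1))) = 1 ∧ M k (f n) (f (n+1)) = 1 := by
        rw [hfs n]
        exact Classical.epsilon_spec hsq.exists
      exact ⟨heps.1, fun _ => by simpa using heps.2⟩
  have huniq_sq : ∀ n : ℕ, ((n:ℤ)+1) ≤ m k → ∀ d,
      M j d (w (base (n+1))) = 1 → M k (f n) d = 1 → d = f (n+1) := by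
    intro n hn d hd1 hd2
    have hn' : (n:ℤ) ≤ m k := by omega
    have P := (key n hn').1
    have hsq := aux_square M hM h1a h1b j k hjk (w (base (n+1))) (w (base n)) (f n)
      (hstep n hn) P
    have hP1 := (key (n+1) (by push_cast; omega)).1
    have hP2 := (key (n+1) (by push_cast; omega)).2 (by omega)
    exact hsq.unique ⟨hd1, hd2⟩ ⟨hP1, by simpa using hP2⟩
  set v : (Fin 2 → ℤ) → A :=
    fun x => if x j = m j + 1 then f (m k - x k).toNat else w x with hvdef
  have hvtop : ∀ n : ℕ, v (base n + evec 2 j) = f n := by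
    intro n
    have h1 : (base n + evec 2 j) j = m j + 1 := by simp [hbase, evec, hjk]
    have h2 : (base n + evec 2 j) k = m k - n := by simp [hbase, evec, Ne.symm hjk]
    have h3 : (m k - (base n + evec 2 j) k).toNat = n := by rw [h2]; omega
    simp only [hvdef, if_pos h1, h3]
  have hagree : AgreeOn m v w := by
    intro l hl0 hlm
    have h1 := pcle hlm j
    have hne : l j ≠ m j + 1 := by omega
    simp only [hvdef, if_neg hne]
  have hvtopa : v (m + evec 2 j) = a := by
    have h := hvtop 0
    rw [hbase0] at h
    rw [h, hf0]
  have hposadd : ∀ (x : Fin 2 → ℤ) (i' : Fin 2), 0 ≤ x → 0 ≤ x + evec 2 i' := by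
    intro x i' hx i''
    have hx' := pc0 hx i''
    simp only [Pi.zero_apply, Pi.add_apply, evec]
    split <;> omega
  have hvword : IsWord M (m + evec 2 j) v := by
    constructor
    · intro i
      have h1 := h0mi i
      simp only [Pi.zero_apply, Pi.add_apply, evec]
      split <;> omega
    · intro l i hl0 hle
      have h0j := pc0 hl0 j
      have h0k := pc0 hl0 k
      rcases hcover i with rfl | rfl
      · -- direction j
        have hlj : l j + 1 ≤ m j + 1 := by simpa [evec] using pcle hle j
        have hlk : l k ≤ m k := by simpa [evec, Ne.symm hjk] using pcle hle k
        by_cases hcase : l j = m j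
        · set n : ℕ := (m k - l k).toNat with hn
          have hnn : (n:ℤ) = m k - l k := by omega
          have hltop : l + evec 2 j = base n + evec 2 j := by
            funext i'
            rcases hcover i' with rfl | rfl <;>
              simp [hbase, evec, hjk, Ne.symm hjk] <;> omega
          have hlbase : l = base n := by
            funext i'
            rcases hcover i' with rfl | rfl <;>
              simp [hbase, hjk, Ne.symm hjk] <;> omega
          have hvl : v l = w l := hagree l hl0 (by rw [hlbase]; exact hbase_le n)
          rw [hltop, hvtop n, hvl, hlbase]
          exact (key n (by omega)).1
        · have hlj' : l j + 1 ≤ m j := by omega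
          have hlem : l + evec 2 j ≤ m := by
            simp only [Pi.le_def]
            intro i'
            rcases hcover i' with rfl | rfl <;> simp [evec, Ne.symm hjk] <;> omega
          have hlem0 : l ≤ m := by
            simp only [Pi.le_def]
            intro i'
            rcases hcover i' with rfl | rfl <;> omega
          rw [hagree l hl0 hlem0, hagree _ (hposadd l j hl0) hlem]
          exact hword l j hl0 hlem
      · -- direction k
        have hlj : l j ≤ m j + 1 := by simpa [evec, hjk] using pcle hle j
        have hlk : l k + 1 ≤ m k := by simpa [evec, Ne.symm hjk] using pcle hle k
        by_cases hcase : l j = m j + 1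
        · set n : ℕ := (m k - l k).toNat with hn
          have hnn : (n:ℤ) = m k - l k := by omega
          have hn1 : 1 ≤ n := by omega
          have hl1 : l = base n + evec 2 j := by
            funext i'
            rcases hcover i' with rfl | rfl <;>
              simp [hbase, evec, hjk, Ne.symm hjk] <;> omega
          have hl2 : l + evec 2 k = base (n-1) + evec 2 j := by
            funext i'
            rcases hcover i' with rfl | rfl <;>
              simp [hbase, evec, hjk, Ne.symm hjk] <;> omega
          rw [hl2, hl1, hvtop, hvtop]
          exact (key n (by omega)).2 (by omega)
        · have hljm : l j ≤ m j := by omega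
          have hlem0 : l ≤ m := by
            simp only [Pi.le_def]
            intro i'
            rcases hcover i' with rfl | rfl <;> omega
          have hlem2 : l + evec 2 k ≤ m := by
            simp only [Pi.le_def]
            intro i'
            rcases hcover i' with rfl | rfl <;> simp [evec, hjk, Ne.symm hjk] <;> omega
          rw [hagree l hl0 hlem0, hagree _ (hposadd l k hl0) hlem2]
          exact hword l k hl0 hlem2
  refine ⟨v, ⟨hvword, hagree, hvtopa⟩, ?_⟩
  intro v' hv' hagree' ha'
  have uniq : ∀ n : ℕ, (n:ℤ) ≤ m k → v' (base n + evec 2 j) = f n := by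
    intro n
    induction n with
    | zero =>
      intro _
      rw [hbase0, hf0]
      exact ha'
    | succ n ih =>
      intro hn
      have hn' : (n:ℤ) ≤ m k := by push_cast at hn; omega
      have ihv := ih hn'
      have hb1 : 0 ≤ base (n+1) := hbase_nonneg (n+1) (by push_cast at hn ⊢; omega)
      have hd1 : M j (v' (base (n+1) + evec 2 j)) (w (base (n+1))) = 1 := by
        have h := hv'.2 (base (n+1)) j hb1 ?_
        · rw [hagree' (base (n+1)) hb1 (hbase_le (n+1))] at h; exact h
        · simp only [Pi.le_def]
          intro i'
          rcases hcover i' with rfl | rfl <;>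
            simp [hbase, evec, hjk, Ne.symm hjk] <;> omega
      have hd2 : M k (f n) (v' (base (n+1) + evec 2 j)) = 1 := by
        have hx : base (n+1) + evec 2 j + evec 2 k = base n + evec 2 j := by
          rw [add_right_comm, hbase_add]
        have h := hv'.2 (base (n+1) + evec 2 j) k (hposadd _ _ hb1) ?_
        · rw [hx, ihv] at h; exact h
        · rw [hx]
          simp only [Pi.le_def]
          intro i'
          rcases hcover i' with rfl | rfl <;>
            simp [hbase, evec, hjk, Ne.symm hjk] <;> omega
      exact huniq_sq n (by push_cast at hn ⊢; omega) _ hd1 hd2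
  intro l hl0 hlm
  by_cases hcase : l j = m j + 1
  · have h0k := pc0 hl0 k
    have hlk : l k ≤ m k := by simpa [evec, Ne.symm hjk] using pcle hlm k
    set n : ℕ := (m k - l k).toNat with hn
    have hnn : (n:ℤ) = m k - l k := by omega
    have hl1 : l = base n + evec 2 j := by
      funext i'
      rcases hcover i' with rfl | rfl <;>
        simp [hbase, evec, hjk, Ne.symm hjk] <;> omega
    rw [hl1, hvtop, uniq n (by omega)]
  · have hlj : l j ≤ m j + 1 := by simpa [evec] using pcle hlm j
    have hlm' : l ≤ m := by
      simp only [Pi.le_def]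
      intro i'
      rcases hcover i' with rfl | rfl
      · omega
      · simpa [evec, Ne.symm hjk] using pcle hlm k
    rw [hagree l hl0 hlm', hagree' l hl0 hlm']
end

section
/- Suppose the matrices M_1,…,M_r satisfy conditions (H0), (H1) and (H2). Let a, b ∈ A and n ∈ ℤ^r with n ≥ 0. Then there exists a word w ∈ W with σ(w) ≥ n (componentwise), o(w) = a and t(w) = b. -/
open Matrix

variable {r : ℕ} {A : Type*}

lemma evec_nonneg (r : ℕ) (j : Fin r) : (0 : Fin r → ℤ) ≤ evec r j := by
  intro i; by_cases h : i = j <;> simp [evec, h]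

lemma single_step (M : Fin r → Matrix A A ℤ) {i : Fin r} {c c' : A}
    (h : M i c' c = 1) :
    IsWord M (evec r i) (fun x => if x = 0 then c else c') := by
  refine ⟨evec_nonneg r i, ?_⟩
  intro l j hl hle
  have hji : j = i := by
    by_contra hne
    have h1 : l j + (if j = j then (1:ℤ) else 0) ≤ (if j = i then (1:ℤ) else 0) := hle j
    have h2 : (0:ℤ) ≤ l j := hl j
    rw [if_pos rfl, if_neg hne] at h1
    omega
  subst hji
  have hl0 : l = 0 := by
    funext k
    have h1 : l k + (if k = j then (1:ℤ) else 0) ≤ (if k = j then (1:ℤ) else 0) := hle k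
    have h2 : (0:ℤ) ≤ l k := hl k
    show l k = 0
    by_cases hk : k = j <;> omega
  subst hl0
  have hne : evec r j ≠ 0 := fun hco => by simpa [evec] using congrFun hco j
  simp [hne, h]

lemma extend_step (M : Fin r → Matrix A A ℤ) (h1 : H1 M)
    {m : Fin r → ℤ} {w : (Fin r → ℤ) → A} (hw : IsWord M m w)
    {i : Fin r} {c' : A} (he : M i c' (w m) = 1) :
    ∃ w', IsWord M (m + evec r i) w' ∧ w' 0 = w 0 ∧ w' (m + evec r i) = c' := by
  set v : (Fin r → ℤ) → A := fun x => if x = 0 then w m else c' with hv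
  have hvword : IsWord M (evec r i) v := single_step M he
  obtain ⟨x, hx, hxu, hxv⟩ := (h1 m (evec r i) w v hw hvword (by simp [hv])).1
  refine ⟨x, hx, ?_, ?_⟩
  · exact hxu 0 le_rfl hw.1
  · have h3 := hxv (evec r i) (evec_nonneg r i) le_rfl
    have hne : evec r i ≠ 0 := by
      intro hco
      have := congrFun hco i
      simp [evec] at this
    simpa [restrictW, add_comm, hv, hne] using h3

lemma path_extend (M : Fin r → Matrix A A ℤ) (h1 : H1 M)
    {c d : A} (hcd : Relation.ReflTransGen (fun x y => ∃ i, M i y x = 1) c d)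
    {m : Fin r → ℤ} {w : (Fin r → ℤ) → A} (hw : IsWord M m w) (hend : w m = c) :
    ∃ m' w', m ≤ m' ∧ IsWord M m' w' ∧ w' 0 = w 0 ∧ w' m' = d := by
  induction hcd with
  | refl => exact ⟨m, w, le_rfl, hw, rfl, hend⟩
  | tail _ he ih =>
    obtain ⟨m', w', hmm, hw', h0', hend'⟩ := ih
    obtain ⟨i, hi⟩ := he
    rw [← hend'] at hi
    obtain ⟨w'', hw'', h0'', hend''⟩ := extend_step M h1 hw' hi
    exact ⟨m' + evec r i, w'', le_trans hmm (le_add_of_nonneg_right (evec_nonneg r i)),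
      hw'', h0''.trans h0', hend''⟩

lemma exists_edge (M : Fin r → Matrix A A ℤ)
    (hM : ∀ j (a b : A), M j b a = 0 ∨ M j b a = 1) (h0 : H0 M) (j : Fin r) :
    ∃ a0 b0 : A, M j b0 a0 = 1 := by
  by_contra hco
  push_neg at hco
  apply h0 j
  ext b0 a0
  rcases hM j a0 b0 with h | h
  · simpa using h
  · exact absurd h (hco a0 b0)

lemma grow_one (M : Fin r → Matrix A A ℤ)
    (hM : ∀ j (a b : A), M j b a = 0 ∨ M j b a = 1)
    (h0 : H0 M) (h1 : H1 M) (h2 : H2 M) (j : Fin r)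
    {m : Fin r → ℤ} {w : (Fin r → ℤ) → A} (hw : IsWord M m w) :
    ∃ m' w', m ≤ m' ∧ m j + 1 ≤ m' j ∧ IsWord M m' w' ∧ w' 0 = w 0 := by
  obtain ⟨a0, b0, hab⟩ := exists_edge M hM h0 j
  obtain ⟨m1, w1, hm1, hw1, h01, hend1⟩ := path_extend M h1 (h2 (w m) a0) hw rfl
  rw [← hend1] at hab
  obtain ⟨w2, hw2, h02, _⟩ := extend_step M h1 hw1 hab
  refine ⟨m1 + evec r j, w2, le_trans hm1 (le_add_of_nonneg_right (evec_nonneg r j)),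
    ?_, hw2, h02.trans h01⟩
  have h4 : (m1 + evec r j) j = m1 j + 1 := by simp [Pi.add_apply, evec]
  have h5 : m j ≤ m1 j := hm1 j
  rw [h4]
  omega

lemma grow_many (M : Fin r → Matrix A A ℤ)
    (hM : ∀ j (a b : A), M j b a = 0 ∨ M j b a = 1)
    (h0 : H0 M) (h1 : H1 M) (h2 : H2 M) (j : Fin r) (k : ℕ) :
    ∀ {m : Fin r → ℤ} {w : (Fin r → ℤ) → A}, IsWord M m w →
    ∃ m' w', m ≤ m' ∧ m j + k ≤ m' j ∧ IsWord M m' w' ∧ w' 0 = w 0 := by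
  induction k with
  | zero => exact fun hw => ⟨_, _, le_rfl, by simp, hw, rfl⟩
  | succ k ih =>
    intro m w hw
    obtain ⟨m1, w1, hm1, hj1, hw1, h01⟩ := ih hw
    obtain ⟨m2, w2, hm2, hj2, hw2, h02⟩ := grow_one M hM h0 h1 h2 j hw1
    refine ⟨m2, w2, le_trans hm1 hm2, ?_, hw2, h02.trans h01⟩
    push_cast
    omega

/-- under (H0), (H1), (H2), for all `a, b ∈ A` and `n ≥ 0` there
is a word `w` with shape `≥ n`, `o(w) = a` and `t(w) = b`. -/
theorem stmt_6 [Fintype A] [Nonempty A] (hr : 0 < r)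
    (M : Fin r → Matrix A A ℤ)
    (hM : ∀ j (a b : A), M j b a = 0 ∨ M j b a = 1)
    (h0 : H0 M) (h1 : H1 M) (h2 : H2 M)
    (a b : A) (n : Fin r → ℤ) (hn : 0 ≤ n) :
    ∃ (m : Fin r → ℤ) (w : (Fin r → ℤ) → A),
      n ≤ m ∧ IsWord M m w ∧ w 0 = a ∧ w m = b := by
  have base : IsWord M 0 (fun _ => a) := by
    refine ⟨le_rfl, ?_⟩
    intro l j hl hle
    exfalso
    have h1 : l j + (if j = j then (1:ℤ) else 0) ≤ 0 := hle j
    have h2 : (0:ℤ) ≤ l j := hl j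
    rw [if_pos rfl] at h1
    omega
  have key : ∀ s : Finset (Fin r), ∃ (m : Fin r → ℤ) (w : (Fin r → ℤ) → A),
      IsWord M m w ∧ w 0 = a ∧ ∀ j ∈ s, n j ≤ m j := by
    intro s
    induction s using Finset.induction with
    | empty => exact ⟨0, fun _ => a, base, rfl, by simp⟩
    | @insert j s hj ih =>
      obtain ⟨m, w, hw, h0w, hs⟩ := ih
      obtain ⟨m', w', hm', hj', hw', h0'⟩ :=
        grow_many M hM h0 h1 h2 j (n j - m j).toNat hw
      refine ⟨m', w', hw', h0'.trans h0w, ?_⟩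
      intro j' hj'mem
      rcases Finset.mem_insert.mp hj'mem with rfl | hmem
      · have := Int.self_le_toNat (n j' - m j')
        omega
      · exact le_trans (hs j' hmem) (hm' j')
  obtain ⟨m, w, hw, h0w, hall⟩ := key Finset.univ
  obtain ⟨m', w', hmm, hw', h0', hend'⟩ := path_extend M h1 (h2 (w m) b) hw rfl
  refine ⟨m', w', ?_, hw', h0'.trans h0w, hend'⟩
  intro j
  exact le_trans (hall j (Finset.mem_univ j)) (hmm j)
end
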